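/- Let Y1 ⊆ Y2 ⊆ closure(Y1) be dynamical domains for a linear operator T. If (T,Y1) is hypermixing, then (T,Y2) is supermixing; and if (T,Y1) is strongly topologically transitive, then (T,Y2) is topologically transitive. -/

import Mathlib

open Set Filter Topology

variable {X : Type*} [NormedAddCommGroup X] [NormedSpace ℝ X] [CompleteSpace X]

/-- The natural domain of the n-th power of an operator `T` with domain `D`:
`D(T^0) = X`, `D(T^{n+1}) = {x ∈ D(T^n) : T^n x ∈ D}`. -/
def pdom (D : Submodule ℝ X) (T : X →ₗ[ℝ] X) : ℕ → Set X
  | 0 => Set.univ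
  | n + 1 => {x | x ∈ pdom D T n ∧ (⇑T)^[n] x ∈ (D : Set X)}

/-- `Y0 = ⋂_{n ≥ 1} D(T^n)`, the maximal dynamical domain. -/
def Y0 (D : Submodule ℝ X) (T : X →ₗ[ℝ] X) : Set X := ⋂ n : ℕ, pdom D T (n + 1)

/-- The orbit of `x` under `T`. -/
def orb (T : X →ₗ[ℝ] X) (x : X) : Set X := Set.range fun n : ℕ => (⇑T)^[n] x

/-- The set of hypercyclic vectors of `T`. -/
def HCset (D : Submodule ℝ X) (T : X →ₗ[ℝ] X) : Set X :=
  {x | x ∈ Y0 D T ∧ Dense (orb T x)}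

/-- The set of relatively hypercyclic vectors of `(T, Y)`. -/
def RHCset (D : Submodule ℝ X) (T : X →ₗ[ℝ] X) (Y : Set X) : Set X :=
  {x | x ∈ Y0 D T ∧ x ≠ 0 ∧ Y ⊆ closure (orb T x ∩ Y)}

/-- `(T, Y)` is topologically transitive (w.r.t. the subspace topology on `Y`). -/
def TT (T : X →ₗ[ℝ] X) (Y : Set X) : Prop :=
  ∀ G H : Set X, IsOpen G → IsOpen H → (G ∩ Y).Nonempty → (H ∩ Y).Nonempty →
    ∃ n : ℕ, ((⇑T)^[n] '' (G ∩ Y) ∩ (H ∩ Y)).Nonempty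

/-- `(T, Y)` is mixing. -/
def Mixing (T : X →ₗ[ℝ] X) (Y : Set X) : Prop :=
  ∀ G H : Set X, IsOpen G → IsOpen H → (G ∩ Y).Nonempty → (H ∩ Y).Nonempty →
    ∃ N : ℕ, ∀ n ≥ N, ((⇑T)^[n] '' (G ∩ Y) ∩ (H ∩ Y)).Nonempty

/-- `(T, Y)` is strongly topologically transitive. -/
def STT (T : X →ₗ[ℝ] X) (Y : Set X) : Prop :=
  ∀ G : Set X, IsOpen G → (G ∩ Y).Nonempty →
    Y \ {0} ⊆ ⋃ n : ℕ, (⇑T)^[n] '' (G ∩ Y)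

/-- `(T, Y)` is hypermixing. -/
def HM (T : X →ₗ[ℝ] X) (Y : Set X) : Prop :=
  ∀ G : Set X, IsOpen G → (G ∩ Y).Nonempty →
    Y \ {0} ⊆ ⋃ i : ℕ, ⋂ n : ℕ, ⋂ (_ : i ≤ n), (⇑T)^[n] '' (G ∩ Y)

/-- `(T, Y)` is supermixing. -/
def SM (T : X →ₗ[ℝ] X) (Y : Set X) : Prop :=
  ∀ G : Set X, IsOpen G → (G ∩ Y).Nonempty →
    Y ⊆ closure ((⋃ i : ℕ, ⋂ n : ℕ, ⋂ (_ : i ≤ n), (⇑T)^[n] '' (G ∩ Y)) ∩ Y)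

/-- The generalized kernel `GK(T) = ⋃_{n ≥ 1} Ker T^n`. -/
def GK (D : Submodule ℝ X) (T : X →ₗ[ℝ] X) : Set X :=
  ⋃ n : ℕ, {x | x ∈ pdom D T (n + 1) ∧ (⇑T)^[n + 1] x = 0}

lemma aux_tendsto_smul {y : X} :
    Tendsto (fun t : ℝ => t • y) (𝓝[≠] (0 : ℝ)) (𝓝 (0 : X)) := by
  have h : Continuous fun t : ℝ => t • y := continuous_id.smul continuous_const
  have h2 : Tendsto (fun t : ℝ => t • y) (𝓝 (0:ℝ)) (𝓝 ((0:ℝ) • y)) := h.tendsto 0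
  simpa using h2.mono_left nhdsWithin_le_nhds

lemma aux_zero_mem_closure (Y : Submodule ℝ X) {y : X} (hy : y ∈ Y) (hy0 : y ≠ 0) :
    (0 : X) ∈ closure ((Y : Set X) \ {0}) := by
  refine mem_closure_of_tendsto (aux_tendsto_smul (y := y)) ?_
  filter_upwards [self_mem_nhdsWithin] with t ht
  have ht' : t ≠ 0 := by simpa using ht
  exact ⟨Y.smul_mem t hy, by simp [smul_eq_zero, ht', hy0]⟩

lemma aux_exists_ne_zero (Y : Submodule ℝ X) {H : Set X} (hH : IsOpen H)
    (hne : (H ∩ (Y : Set X)).Nonempty) {y : X} (hy : y ∈ Y) (hy0 : y ≠ 0) :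
    ∃ w, w ∈ H ∩ (Y : Set X) ∧ w ≠ 0 := by
  obtain ⟨w0, hw0H, hw0Y⟩ := hne
  by_cases h0 : w0 = 0
  · subst h0
    have hev : ∀ᶠ t : ℝ in 𝓝[≠] (0 : ℝ), t • y ∈ H :=
      aux_tendsto_smul.eventually_mem (hH.mem_nhds hw0H)
    obtain ⟨t, htH, ht0⟩ := (hev.and self_mem_nhdsWithin).exists
    have ht' : t ≠ 0 := by simpa using ht0
    exact ⟨t • y, ⟨htH, Y.smul_mem t hy⟩, by simp [smul_eq_zero, ht', hy0]⟩
  · exact ⟨w0, ⟨hw0H, hw0Y⟩, h0⟩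

/-- for an up-to-closure extension `Y1 ⊆ Y2 ⊆ closure Y1`, hypermixing of
`(T,Y1)` gives supermixing of `(T,Y2)`, and strong topological transitivity of `(T,Y1)`
gives topological transitivity of `(T,Y2)`. -/
theorem stmt19 [TopologicalSpace.SeparableSpace X] (hinf : ¬ FiniteDimensional ℝ X)
    (D : Submodule ℝ X) (T : X →ₗ[ℝ] X) (Y1 Y2 : Submodule ℝ X)
    (h12 : (Y1 : Set X) ⊆ (Y2 : Set X)) (hY2 : (Y2 : Set X) ⊆ Y0 D T)
    (h2c : (Y2 : Set X) ⊆ closure (Y1 : Set X)) :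
    (HM T (Y1 : Set X) → SM T (Y2 : Set X)) ∧
    (STT T (Y1 : Set X) → TT T (Y2 : Set X)) := by
  -- open sets meeting Y2 meet Y1
  have hmeet : ∀ G : Set X, IsOpen G → (G ∩ (Y2 : Set X)).Nonempty →
      (G ∩ (Y1 : Set X)).Nonempty := by
    intro G hG ⟨z, hzG, hzY2⟩
    exact mem_closure_iff.mp (h2c hzY2) G hG hzG
  have himg : ∀ (n : ℕ) (G : Set X),
      (⇑T)^[n] '' (G ∩ (Y1 : Set X)) ⊆ (⇑T)^[n] '' (G ∩ (Y2 : Set X)) :=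
    fun n G => Set.image_mono (Set.inter_subset_inter_right _ h12)
  have hT0 : ∀ n : ℕ, (⇑T)^[n] (0 : X) = 0 := fun n =>
    Function.iterate_fixed (map_zero T) n
  constructor
  · -- HM → SM
    intro hHM G hG hGne
    have hGY1 := hmeet G hG hGne
    set S : Set X := ⋃ i : ℕ, ⋂ n : ℕ, ⋂ (_ : i ≤ n), (⇑T)^[n] '' (G ∩ (Y2 : Set X))
      with hS
    have hsub : (Y1 : Set X) \ {0} ⊆ S ∩ (Y2 : Set X) := by
      intro x hx
      refine ⟨?_, h12 hx.1⟩
      have := hHM G hG hGY1 hx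
      simp only [hS, Set.mem_iUnion, Set.mem_iInter] at this ⊢
      obtain ⟨i, hi⟩ := this
      exact ⟨i, fun n hn => himg n G (hi n hn)⟩
    by_cases hY1 : ∃ y ∈ Y1, y ≠ (0 : X)
    · obtain ⟨y, hy, hy0⟩ := hY1
      have h1 : (Y1 : Set X) ⊆ closure (S ∩ (Y2 : Set X)) := by
        intro x hx
        by_cases hx0 : x = 0
        · subst hx0
          exact closure_mono hsub (aux_zero_mem_closure Y1 hy hy0)
        · exact subset_closure (hsub ⟨hx, hx0⟩)
      exact h2c.trans (closure_minimal h1 isClosed_closure)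
    · push_neg at hY1
      have hY1sub : (Y1 : Set X) ⊆ {0} := fun y hy => hY1 y hy
      have hY2sub : (Y2 : Set X) ⊆ {0} :=
        h2c.trans ((closure_minimal hY1sub isClosed_singleton))
      intro x hx
      have hx0 : x = 0 := hY2sub hx
      subst hx0
      refine subset_closure ⟨?_, hx⟩
      obtain ⟨z, hzG, hzY2⟩ := hGne
      have hz0 : z = 0 := hY2sub hzY2
      subst hz0
      simp only [hS, Set.mem_iUnion, Set.mem_iInter]
      exact ⟨0, fun n _ => ⟨0, ⟨hzG, hzY2⟩, hT0 n⟩⟩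
  · -- STT → TT
    intro hSTT G H hG hH hGne hHne
    have hGY1 := hmeet G hG hGne
    by_cases hY1 : ∃ y ∈ Y1, y ≠ (0 : X)
    · obtain ⟨y, hy, hy0⟩ := hY1
      obtain ⟨w, ⟨hwH, hwY1⟩, hw0⟩ :=
        aux_exists_ne_zero Y1 hH (hmeet H hH hHne) hy hy0
      have := hSTT G hG hGY1 ⟨hwY1, hw0⟩
      simp only [Set.mem_iUnion] at this
      obtain ⟨n, hn⟩ := this
      exact ⟨n, w, himg n G hn, hwH, h12 hwY1⟩
    · push_neg at hY1
      have hY1sub : (Y1 : Set X) ⊆ {0} := fun y hy => hY1 y hy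
      have hY2sub : (Y2 : Set X) ⊆ {0} :=
        h2c.trans ((closure_minimal hY1sub isClosed_singleton))
      obtain ⟨z, hzG, hzY2⟩ := hGne
      obtain ⟨w, hwH, hwY2⟩ := hHne
      have hz0 : z = 0 := hY2sub hzY2
      have hw0 : w = 0 := hY2sub hwY2
      subst hz0; subst hw0
      exact ⟨0, 0, ⟨0, ⟨hzG, hzY2⟩, rfl⟩, hwH, hwY2⟩
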